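/- Let ζ be a primitive m-th root of unity in a field of characteristic zero (for some positive integer m). Then σ(σ(ζ)) = ζ for every element σ of the Galois group Gal(ℚ(ζ)/ℚ) if, and only if, ζ²⁴ = 1 (equivalently, m divides 24). -/

import Mathlib

set_option maxHeartbeats 1000000

open Polynomial IntermediateField


lemma units_sq_eq_one_iff_dvd_24 (m : ℕ) (hm : 0 < m) :
    (∀ a : (ZMod m)ˣ, a ^ 2 = 1) ↔ m ∣ 24 := by
  haveI : NeZero m := ⟨hm.ne'⟩
  constructor
  · intro h
    have descend : ∀ d, d ∣ m → ∀ b : (ZMod d)ˣ, b ^ 2 = 1 := by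
      intro d hd b
      obtain ⟨a, rfl⟩ := ZMod.unitsMap_surjective hd b
      rw [← map_pow, h a, map_one]
    rw [← Nat.factorization_le_iff_dvd hm.ne' (by norm_num)]
    intro p
    by_cases hp : p.Prime
    · rcases eq_or_ne p 2 with rfl | h2
      · have h16 : ¬ (2 ^ 4 ∣ m) := by
          intro hdvd
          have := descend _ hdvd
          revert this
          decide
        have hle : m.factorization 2 ≤ 3 := by
          by_contra hc
          exact h16 ((Nat.Prime.pow_dvd_iff_le_factorization Nat.prime_two hm.ne').mpr (by omega))
        refine hle.trans ?_
        exact (Nat.Prime.pow_dvd_iff_le_factorization Nat.prime_two (by norm_num)).mp (by norm_num)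
      rcases eq_or_ne p 3 with rfl | h3
      · have h9 : ¬ (3 ^ 2 ∣ m) := by
          intro hdvd
          have := descend _ hdvd
          revert this
          decide
        have hle : m.factorization 3 ≤ 1 := by
          by_contra hc
          exact h9 ((Nat.Prime.pow_dvd_iff_le_factorization Nat.prime_three hm.ne').mpr (by omega))
        refine hle.trans ?_
        exact (Nat.Prime.pow_dvd_iff_le_factorization Nat.prime_three (by norm_num)).mp (by norm_num)
      · -- p prime, p ≥ 5
        have hp5 : 5 ≤ p := by
          have h2le := hp.two_le
          have h4 : p ≠ 4 := by rintro rfl; norm_num at hp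
          omega
        have hpm : ¬ p ∣ m := by
          intro hdvd
          haveI : NeZero p := ⟨hp.pos.ne'⟩
          have hcop : Nat.Coprime 2 p := (Nat.coprime_primes Nat.prime_two hp).mpr (by omega)
          have := descend p hdvd (ZMod.unitOfCoprime 2 hcop)
          have h4 : (4 : ZMod p) = 1 := by
            have h := congrArg Units.val this
            rw [Units.val_pow_eq_pow_val, Units.val_one, ZMod.coe_unitOfCoprime] at h
            calc (4 : ZMod p) = ((2:ℕ) : ZMod p) ^ 2 := by push_cast; ring
            _ = 1 := h
          have h3 : ((3 : ℕ) : ZMod p) = 0 := by push_cast; linear_combination h4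
          have := (ZMod.natCast_eq_zero_iff 3 p).mp h3
          have := Nat.le_of_dvd (by norm_num) this
          omega
        simp [Nat.factorization_eq_zero_of_not_dvd hpm]
    · simp [Nat.factorization_eq_zero_of_not_prime _ hp]
  · intro h a
    obtain ⟨b, rfl⟩ := ZMod.unitsMap_surjective (hm := ⟨by norm_num⟩) h a
    rw [← map_pow, show ∀ c : (ZMod 24)ˣ, c ^ 2 = 1 by decide, map_one]

/-- For a primitive `m`-th root of unity `ζ` in a characteristic-zero field, one has
`σ(σ(ζ)) = ζ` for every `σ ∈ Gal(ℚ(ζ)/ℚ)` if and only if `ζ²⁴ = 1`, equivalently `m ∣ 24`. -/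
theorem sq_galois_fixes_primitive_root_iff
    (K : Type) [Field K] [CharZero K] (m : ℕ) (hm : 0 < m)
    (ζ : K) (hζ : IsPrimitiveRoot ζ m) :
    ((∀ σ : (IntermediateField.adjoin ℚ {ζ}) ≃ₐ[ℚ] (IntermediateField.adjoin ℚ {ζ}),
        σ (σ ⟨ζ, IntermediateField.subset_adjoin ℚ {ζ} rfl⟩) =
          ⟨ζ, IntermediateField.subset_adjoin ℚ {ζ} rfl⟩) ↔ ζ ^ 24 = 1) ∧
    (ζ ^ 24 = 1 ↔ m ∣ 24) := by
  have h24 : ζ ^ 24 = 1 ↔ m ∣ 24 := hζ.pow_eq_one_iff_dvd 24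
  refine ⟨?_, h24⟩
  rw [h24, ← units_sq_eq_one_iff_dvd_24 m hm]
  haveI : NeZero m := ⟨hm.ne'⟩
  set L := IntermediateField.adjoin ℚ {ζ} with hL
  let n : ℕ+ := ⟨m, hm⟩
  have hζn : IsPrimitiveRoot ζ ((n : ℕ)) := hζ
  have hint : IsIntegral ℚ ζ := (hζ.isIntegral hm).tower_top
  have H := IntermediateField.adjoin_simple_toSubalgebra_of_isAlgebraic hint.isAlgebraic
  haveI : IsCyclotomicExtension {(n : ℕ)} ℚ L := by
    refine IsCyclotomicExtension.equiv _ _ _ (h := ?_) (.refl : L.toSubalgebra ≃ₐ[ℚ] _)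
    rw [hL, H]
    exact hζn.adjoin_isCyclotomicExtension ℚ
  set η : L := ⟨ζ, IntermediateField.subset_adjoin ℚ {ζ} rfl⟩ with hη'
  have hη : IsPrimitiveRoot η m := IsPrimitiveRoot.coe_submonoidClass_iff.mp hζ
  have hirr : Irreducible (cyclotomic n ℚ) := cyclotomic.irreducible_rat n.pos
  let e := IsCyclotomicExtension.autEquivPow L hirr
  have hspec : ∀ σ : L ≃ₐ[ℚ] L, η ^ ((hη.autToPow ℚ σ : ZMod m)).val = σ η :=
    fun σ => hη.autToPow_spec ℚ σ
  have hsurj : Function.Surjective (hη.autToPow ℚ) := by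
    have heq : ∀ σ : L ≃ₐ[ℚ] L, hη.autToPow ℚ σ = e σ := by
      intro σ
      have h0 : e σ = (IsCyclotomicExtension.zeta_spec n ℚ ↥L).autToPow ℚ σ := rfl
      rw [h0, IsPrimitiveRoot.autToPow_eq_modularCyclotomicCharacter m ℚ hη σ,
        IsPrimitiveRoot.autToPow_eq_modularCyclotomicCharacter (n:ℕ) ℚ
          (IsCyclotomicExtension.zeta_spec n ℚ ↥L) σ]
      rfl
    intro a
    exact ⟨e.symm a, by rw [heq]; exact e.apply_symm_apply a⟩
  have horder : orderOf ζ = m := hζ.eq_orderOf.symm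
  have hiff : ∀ σ : L ≃ₐ[ℚ] L, (σ (σ η) = η ↔ (hη.autToPow ℚ σ) ^ 2 = 1) := by
    intro σ
    set a := hη.autToPow ℚ σ with ha
    set v := ((a : ZMod m)).val with hv
    have hca : ((v : ℕ) : ZMod m) = (a : ZMod m) := by
      rw [hv, ZMod.natCast_val, ZMod.cast_id]
    have hση : σ η = η ^ v := (hspec σ).symm
    have h1 : ((σ (σ η) : L) : K) = ζ ^ (v * v) := by
      rw [hση, map_pow, hση, ← pow_mul]
      push_cast
      rfl
    have h2 : σ (σ η) = η ↔ ζ ^ (v * v) = ζ ^ 1 := by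
      rw [pow_one, Subtype.ext_iff, h1]
    rw [h2]
    have hu : IsUnit ζ := hζ.isUnit hm.ne'
    have huo : orderOf hu.unit = m := by rw [← horder, ← orderOf_units, hu.unit_spec]
    have h3 : ζ ^ (v * v) = ζ ^ 1 ↔ v * v ≡ 1 [MOD m] := by
      rw [← hu.unit_spec, ← Units.val_pow_eq_pow_val, ← Units.val_pow_eq_pow_val,
        ← Units.ext_iff, pow_eq_pow_iff_modEq, huo]
    rw [h3]
    constructor
    · intro hmod
      have hc : ((v * v : ℕ) : ZMod m) = ((1 : ℕ) : ZMod m) :=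
        (ZMod.natCast_eq_natCast_iff _ _ _).mpr hmod
      ext
      rw [Units.val_pow_eq_pow_val, Units.val_one, sq, ← hca, ← Nat.cast_mul, hc, Nat.cast_one]
    · intro h
      have hc : ((v * v : ℕ) : ZMod m) = ((1 : ℕ) : ZMod m) := by
        have hh := congrArg Units.val h
        rw [Units.val_pow_eq_pow_val, Units.val_one, sq] at hh
        push_cast
        rw [hca, hh]
      exact (ZMod.natCast_eq_natCast_iff _ _ _).mp hc
  constructor
  · intro hfix a
    obtain ⟨σ, rfl⟩ := hsurj a
    exact (hiff σ).mp (hfix σ)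
  · intro hall σ
    exact (hiff σ).mpr (hall _)
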